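/- Let θ ∈ ℝ^k be a vector of angles with ‖θ‖_∞ ≤ π/4. Define d_A = ‖θ‖_2, d_F = ‖sin θ‖_2 (i.e., the ℓ² norm of the vector with entries sin θ_i), and r = (∑_i ((1 - sin² θ_i)^{-1} - 1))^{1/2} = (∑_i tan² θ_i)^{1/2}. Then (π/2)·r ≥ (π/2)·d_F ≥ d_A ≥ (1/√2)·r. -/

import Mathlib

open Real in
lemma pt1 {x : ℝ} (hx : |x| ≤ π / 4) : sin x ^ 2 ≤ tan x ^ 2 := by
  have hc : 0 < cos x := cos_pos_of_mem_Ioo ⟨by cases abs_le.1 hx; nlinarith [pi_pos],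
    by cases abs_le.1 hx; nlinarith [pi_pos]⟩
  have hc1 : cos x ≤ 1 := cos_le_one x
  rw [tan_eq_sin_div_cos, div_pow]
  rw [le_div_iff₀ (by positivity)]
  nlinarith [mul_nonneg (sq_nonneg (sin x)) (by nlinarith : (0:ℝ) ≤ 1 - cos x ^ 2)]

open Real in
lemma pt2 {x : ℝ} (hx : |x| ≤ π / 4) : x ^ 2 ≤ (π / 2) ^ 2 * sin x ^ 2 := by
  have h := mul_abs_le_abs_sin (x := x) (by linarith [pi_pos])
  have hπ : (0:ℝ) < π := pi_pos
  have h2 : (2 / π * |x|) ^ 2 ≤ |sin x| ^ 2 := by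
    apply pow_le_pow_left₀ (by positivity) h
  rw [mul_pow, sq_abs, sq_abs] at h2
  have : (2 / π) ^ 2 * x ^ 2 ≤ sin x ^ 2 := h2
  calc x ^ 2 = (π / 2) ^ 2 * ((2 / π) ^ 2 * x ^ 2) := by field_simp
    _ ≤ (π / 2) ^ 2 * sin x ^ 2 := by nlinarith

open Real in
lemma pt3 {x : ℝ} (hx : |x| ≤ π / 4) : tan x ^ 2 ≤ 2 * x ^ 2 := by
  obtain ⟨h1, h2⟩ := abs_le.1 hx
  have hπ : (0:ℝ) < π := pi_pos
  have hc : cos (π / 4) ≤ cos x := by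
    rw [← cos_abs x]
    exact cos_le_cos_of_nonneg_of_le_pi (abs_nonneg x) (by linarith) hx
  rw [cos_pi_div_four] at hc
  have hs : Real.sqrt 2 / 2 > 0 := by positivity
  have hc0 : 0 < cos x := lt_of_lt_of_le hs hc
  have habs : |tan x| ≤ Real.sqrt 2 * |x| := by
    rw [tan_eq_sin_div_cos, abs_div, abs_of_pos hc0, div_le_iff₀ hc0]
    calc |sin x| ≤ |x| := abs_sin_le_abs
      _ = Real.sqrt 2 * |x| * (Real.sqrt 2 / 2) := by
          rw [mul_comm (Real.sqrt 2) |x|, mul_assoc]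
          have h22 : Real.sqrt 2 * Real.sqrt 2 = 2 := Real.mul_self_sqrt (by norm_num)
          field_simp
          rw [sq, h22]
      _ ≤ Real.sqrt 2 * |x| * cos x := by
          apply mul_le_mul_of_nonneg_left hc (by positivity)
  have := pow_le_pow_left₀ (abs_nonneg _) habs 2
  rw [sq_abs, mul_pow, sq_abs, Real.sq_sqrt (by norm_num : (0:ℝ) ≤ 2)] at this
  exact this

/-- Equivalence of the arc-length distance, projected Frobenius distance, and the
inverse-retraction norm, in terms of the vector of principal angles `θ` with
`‖θ‖_∞ ≤ π/4`. -/
theorem stmt2 (k : ℕ) (θ : Fin k → ℝ) (hθ : ∀ i, |θ i| ≤ Real.pi / 4) :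
    (Real.pi / 2) * Real.sqrt (∑ i, Real.sin (θ i) ^ 2) ≤
        (Real.pi / 2) * Real.sqrt (∑ i, Real.tan (θ i) ^ 2) ∧
    Real.sqrt (∑ i, (θ i) ^ 2) ≤ (Real.pi / 2) * Real.sqrt (∑ i, Real.sin (θ i) ^ 2) ∧
    (1 / Real.sqrt 2) * Real.sqrt (∑ i, Real.tan (θ i) ^ 2) ≤ Real.sqrt (∑ i, (θ i) ^ 2) := by
  have hπ : (0:ℝ) < Real.pi := Real.pi_pos
  refine ⟨?_, ?_, ?_⟩
  · apply mul_le_mul_of_nonneg_left _ (by positivity)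
    apply Real.sqrt_le_sqrt
    exact Finset.sum_le_sum fun i _ => pt1 (hθ i)
  · have : Real.sqrt (∑ i, (θ i) ^ 2) ≤ Real.sqrt ((Real.pi / 2) ^ 2 * ∑ i, Real.sin (θ i) ^ 2) := by
      apply Real.sqrt_le_sqrt
      rw [Finset.mul_sum]
      exact Finset.sum_le_sum fun i _ => pt2 (hθ i)
    rwa [Real.sqrt_mul (by positivity), Real.sqrt_sq (by positivity)] at this
  · have : Real.sqrt (∑ i, Real.tan (θ i) ^ 2) ≤ Real.sqrt (2 * ∑ i, (θ i) ^ 2) := by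
      apply Real.sqrt_le_sqrt
      rw [Finset.mul_sum]
      exact Finset.sum_le_sum fun i _ => pt3 (hθ i)
    rw [Real.sqrt_mul (by norm_num)] at this
    rw [one_div, inv_mul_le_iff₀ (by positivity)]
    exact this
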